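/- Let H be a Hilbert space and let f : ℕ → H with F_L(ℓ) := ∑_{k=ℓ-L}^{ℓ+L} k ‖f(k)‖² (for ℓ ≥ L). Suppose there is μ > 0 such that for all admissible ℓ and all L ≤ L' ≤ 2L-2: μ F_{L'}(ℓ) ≤ g(ℓ+L'+2) + g(ℓ+L'+1) + g(ℓ-L'-1) + g(ℓ-L'-2), where g(k) := k‖f(k)‖². Then F_L(ℓ+L) + F_L(ℓ-L) ≥ (μ/2)(L-3) F_L(ℓ). -/

import Mathlib

open Finset

lemma sum_emb_aux (g : ℕ → ℝ) (hg : ∀ k, 0 ≤ g k) (s t : Finset ℕ) (e : ℕ → ℕ)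
    (he : ∀ x ∈ s, ∀ y ∈ s, e x = e y → x = y)
    (hsub : ∀ j ∈ s, e j ∈ t) :
    ∑ j ∈ s, g (e j) ≤ ∑ k ∈ t, g k := by
  rw [← Finset.sum_image he]
  exact Finset.sum_le_sum_of_subset_of_nonneg
    (fun k hk => by
      obtain ⟨j, hj, rfl⟩ := Finset.mem_image.mp hk
      exact hsub j hj)
    (fun k _ _ => hg k)

/-- Step 2 of the proof of the difference inequality. With
`g k = k ‖f k‖²` and `F_{L'}(ℓ) = ∑_{k=ℓ-L'}^{ℓ+L'} k ‖f k‖²`, if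
`μ F_{L'}(ℓ) ≤ g(ℓ+L'+2) + g(ℓ+L'+1) + g(ℓ-L'-1) + g(ℓ-L'-2)` for all
`L ≤ L' ≤ 2L-2`, then `F_L(ℓ+L) + F_L(ℓ-L) ≥ (μ/2)(L-3) F_L(ℓ)`. -/
theorem stmt7 {H : Type*} [NormedAddCommGroup H] (f : ℕ → H) (μ : ℝ) (L ℓ : ℕ)
    (hμ : 0 < μ) (hL : 1 ≤ L) (hℓ : 2 * L ≤ ℓ)
    (F : ℕ → ℕ → ℝ)
    (hF : ∀ L' m, F L' m = ∑ k ∈ Finset.Icc (m - L') (m + L'), (k : ℝ) * ‖f k‖ ^ 2)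
    (hyp : ∀ L', L ≤ L' → L' ≤ 2 * L - 2 →
      μ * F L' ℓ ≤ (↑(ℓ + L' + 2) : ℝ) * ‖f (ℓ + L' + 2)‖ ^ 2
        + (↑(ℓ + L' + 1) : ℝ) * ‖f (ℓ + L' + 1)‖ ^ 2
        + (↑(ℓ - L' - 1) : ℝ) * ‖f (ℓ - L' - 1)‖ ^ 2
        + (↑(ℓ - L' - 2) : ℝ) * ‖f (ℓ - L' - 2)‖ ^ 2) :
    μ / 2 * ((L : ℝ) - 3) * F L ℓ ≤ F L (ℓ + L) + F L (ℓ - L) := by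
  set g : ℕ → ℝ := fun k => (k : ℝ) * ‖f k‖ ^ 2 with hg
  have hgnn : ∀ k, 0 ≤ g k := fun k => by positivity
  have hFnn : ∀ L' m, 0 ≤ F L' m := fun L' m => by
    rw [hF]; exact Finset.sum_nonneg fun k _ => hgnn k
  -- monotonicity: F L ℓ ≤ F (L+j) ℓ
  have hmono : ∀ j : ℕ, F L ℓ ≤ F (L + j) ℓ := by
    intro j
    rw [hF, hF]
    refine Finset.sum_le_sum_of_subset_of_nonneg ?_ (fun k _ _ => hgnn k)
    intro k hk
    simp only [Finset.mem_Icc] at *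
    omega
  -- pointwise bound on range (L-1)
  have key : ∀ j ∈ Finset.range (L - 1),
      μ * F L ℓ ≤ g (ℓ + (L + j) + 2) + g (ℓ + (L + j) + 1)
        + g (ℓ - (L + j) - 1) + g (ℓ - (L + j) - 2) := by
    intro j hj
    simp only [Finset.mem_range] at hj
    have h1 := hyp (L + j) (by omega) (by omega)
    have h2 : μ * F L ℓ ≤ μ * F (L + j) ℓ :=
      mul_le_mul_of_nonneg_left (hmono j) hμ.le
    exact h2.trans h1
  have hsum := Finset.card_nsmul_le_sum (Finset.range (L - 1)) _ _ key
  rw [Finset.card_range] at hsum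
  -- split the RHS sum into four
  have hsplit : ∑ j ∈ Finset.range (L - 1),
      (g (ℓ + (L + j) + 2) + g (ℓ + (L + j) + 1)
        + g (ℓ - (L + j) - 1) + g (ℓ - (L + j) - 2))
      = (∑ j ∈ Finset.range (L - 1), g (ℓ + (L + j) + 2))
      + (∑ j ∈ Finset.range (L - 1), g (ℓ + (L + j) + 1))
      + (∑ j ∈ Finset.range (L - 1), g (ℓ - (L + j) - 1))
      + (∑ j ∈ Finset.range (L - 1), g (ℓ - (L + j) - 2)) := by
    simp [Finset.sum_add_distrib]
  have b1 : ∑ j ∈ Finset.range (L - 1), g (ℓ + (L + j) + 2) ≤ F L (ℓ + L) := by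
    rw [hF]
    exact sum_emb_aux g hgnn _ _ _ (fun x _ y _ h => by omega)
      (fun j hj => by simp only [Finset.mem_range] at hj; simp only [Finset.mem_Icc]; omega)
  have b2 : ∑ j ∈ Finset.range (L - 1), g (ℓ + (L + j) + 1) ≤ F L (ℓ + L) := by
    rw [hF]
    exact sum_emb_aux g hgnn _ _ _ (fun x _ y _ h => by omega)
      (fun j hj => by simp only [Finset.mem_range] at hj; simp only [Finset.mem_Icc]; omega)
  have b3 : ∑ j ∈ Finset.range (L - 1), g (ℓ - (L + j) - 1) ≤ F L (ℓ - L) := by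
    rw [hF]
    refine sum_emb_aux g hgnn _ _ _ ?_ ?_
    · intro x hx y hy h
      simp only [Finset.mem_range] at hx hy
      omega
    · intro j hj
      simp only [Finset.mem_range] at hj; simp only [Finset.mem_Icc]; omega
  have b4 : ∑ j ∈ Finset.range (L - 1), g (ℓ - (L + j) - 2) ≤ F L (ℓ - L) := by
    rw [hF]
    refine sum_emb_aux g hgnn _ _ _ ?_ ?_
    · intro x hx y hy h
      simp only [Finset.mem_range] at hx hy
      omega
    · intro j hj
      simp only [Finset.mem_range] at hj; simp only [Finset.mem_Icc]; omega
  rw [hsplit] at hsum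
  have hcast : ((L - 1 : ℕ) : ℝ) = (L : ℝ) - 1 := by
    push_cast [Nat.cast_sub hL]; ring
  rw [nsmul_eq_mul, hcast] at hsum
  have hF0 := hFnn L ℓ
  have hFp := hFnn L (ℓ + L)
  have hFm := hFnn L (ℓ - L)
  nlinarith [mul_nonneg hμ.le hF0]
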